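/- Let T > 0, θ ≥ 0, γ ≥ 0, λ ≥ 0, and define v̌(t) = 1/(e^{θ(T-t)} (T-t)) for t ∈ [0,T). Then v̌ satisfies -v̌'(t) - F(v̌(t)) ≤ 0 for all t ∈ [0,T), where F(v) = λ - v^2 + θγv/(γ+v) - θv. -/

import Mathlib

theorem stmt_5 (T θ γ lam : ℝ) (hT : 0 < T) (hθ : 0 ≤ θ) (hγ : 0 ≤ γ) (hlam : 0 ≤ lam)
    (vcheck : ℝ → ℝ)
    (hvcheck : ∀ t : ℝ, vcheck t = 1 / (Real.exp (θ * (T - t)) * (T - t)))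
    (F : ℝ → ℝ)
    (hF : ∀ v : ℝ, F v = lam - v ^ 2 + θ * γ * v / (γ + v) - θ * v) :
    ∀ t : ℝ, 0 ≤ t → t < T → -deriv vcheck t - F (vcheck t) ≤ 0 := by
  intro t ht htT
  have hs : 0 < T - t := by linarith
  have hE : (0:ℝ) < Real.exp (θ * (T - t)) := Real.exp_pos _
  have hg : Real.exp (θ * (T - t)) * (T - t) ≠ 0 := by positivity
  have hsub : HasDerivAt (fun x : ℝ => T - x) (-1) t := by
    simpa using (hasDerivAt_id t).const_sub T
  have hlin : HasDerivAt (fun x : ℝ => θ * (T - x)) (θ * -1) t := hsub.const_mul θ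
  have hexp : HasDerivAt (fun x : ℝ => Real.exp (θ * (T - x)))
      (Real.exp (θ * (T - t)) * (θ * -1)) t := hlin.exp
  have hgder : HasDerivAt (fun x : ℝ => Real.exp (θ * (T - x)) * (T - x))
      (Real.exp (θ * (T - t)) * (θ * -1) * (T - t) + Real.exp (θ * (T - t)) * (-1)) t :=
    hexp.mul hsub
  have hv : HasDerivAt (fun x : ℝ => 1 / (Real.exp (θ * (T - x)) * (T - x)))
      (-(Real.exp (θ * (T - t)) * (θ * -1) * (T - t) + Real.exp (θ * (T - t)) * (-1)) /
        (Real.exp (θ * (T - t)) * (T - t)) ^ 2) t := by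
    simp only [one_div]
    exact hgder.inv hg
  have hfun : vcheck = fun x => 1 / (Real.exp (θ * (T - x)) * (T - x)) := funext hvcheck
  rw [hfun, hv.deriv, hF]
  set E := Real.exp (θ * (T - t)) with hEdef
  set s := T - t with hsdef
  have hE1 : (1:ℝ) ≤ E := Real.one_le_exp (mul_nonneg hθ hs.le)
  have hv0 : (0:ℝ) < 1 / (E * s) := by positivity
  have hA : 0 ≤ θ * γ * (1 / (E * s)) / (γ + 1 / (E * s)) := by
    apply div_nonneg
    · exact mul_nonneg (mul_nonneg hθ hγ) hv0.le
    · linarith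
  have hcore : -(-(E * (θ * -1) * s + E * (-1)) / (E * s) ^ 2) + (1 / (E * s)) ^ 2
      + θ * (1 / (E * s)) = (1 - E) / (E * s) ^ 2 := by
    field_simp
    ring
  have hneg : (1 - E) / (E * s) ^ 2 ≤ 0 := by
    apply div_nonpos_of_nonpos_of_nonneg
    · linarith
    · positivity
  simp only []
  linarith [hA, hcore, hneg, hlam]
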